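/- For the cycle graph C_n with n odd, there are no almost-SEMI-admissible partial orientations; for n even, there are exactly 2·binom(n, n/2) almost-SEMI-admissible partial orientations, namely those obtained by choosing exactly half of the edges and orienting them all consistently in one of the two rotational directions around the cycle, leaving the rest blank. -/

import Mathlib

open Finset SimpleGraph
open scoped Classical

variable {V : Type*} [Fintype V] [DecidableEq V]

/-- `O` is a partial orientation of `G`: a set of steps along edges of `G`,
containing at most one direction per edge. -/
def IsPO (G : SimpleGraph V) (O : Finset (V × V)) : Prop :=
  ∀ p ∈ O, G.Adj p.1 p.2 ∧ (p.2, p.1) ∉ O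

/-- A total orientation orients every edge. -/
def IsTotalOn (G : SimpleGraph V) (O : Finset (V × V)) : Prop :=
  ∀ u v : V, G.Adj u v → (u, v) ∈ O ∨ (v, u) ∈ O

/-- `O` contains a directed cycle of steps. -/
def HasDirCycle (O : Finset (V × V)) : Prop :=
  ∃ (k : ℕ) (c : Fin (k + 1) → V), 1 ≤ k ∧ Function.Injective c ∧
    ∀ i : Fin (k + 1), (c i, c (i + 1)) ∈ O

/-- An acyclic partial orientation. -/
def IsAcyclicPO (G : SimpleGraph V) (O : Finset (V × V)) : Prop :=
  IsPO G O ∧ ¬ HasDirCycle O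

/-- Indegree of vertex `v` in the orientation `O`. -/
def indeg (O : Finset (V × V)) (v : V) : ℕ := (O.filter (fun p => p.2 = v)).card

/-- A potential cycle for `O`: a directed cycle of steps, each compatible with `O`
(i.e. whose reversal is not in `O`). -/
def IsPotCycle (G : SimpleGraph V) (O : Finset (V × V)) {k : ℕ} (c : Fin (k + 1) → V) : Prop :=
  1 ≤ k ∧ Function.Injective c ∧
    ∀ i : Fin (k + 1), G.Adj (c i) (c (i + 1)) ∧ (c (i + 1), c i) ∉ O

/-- Score of a step compatible with `O`, with respect to the parameter list `a`. -/
def stepScore (a : V → V → ℝ) (O : Finset (V × V)) (p : V × V) : ℝ :=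
  if p ∈ O then -(a p.2 p.1) else a p.1 p.2

/-- Score of a potential cycle. -/
def cycScore (a : V → V → ℝ) (O : Finset (V × V)) {k : ℕ} (c : Fin (k + 1) → V) : ℝ :=
  ∑ i : Fin (k + 1), stepScore a O (c i, c (i + 1))

/-- `O` is `a`-admissible: every potential cycle has strictly positive score. -/
def IsAdmissible (G : SimpleGraph V) (a : V → V → ℝ) (O : Finset (V × V)) : Prop :=
  ∀ (k : ℕ) (c : Fin (k + 1) → V), IsPotCycle G O c → 0 < cycScore a O c

/-- `O` is almost-`a`-admissible: not admissible, but no potential cycle has negative score. -/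
def IsAlmostAdmissible (G : SimpleGraph V) (a : V → V → ℝ) (O : Finset (V × V)) : Prop :=
  ¬ IsAdmissible G a O ∧
    ∀ (k : ℕ) (c : Fin (k + 1) → V), IsPotCycle G O c → 0 ≤ cycScore a O c

/-- The parameter list condition: the central region of `Σ_G(A)` is nonempty. -/
def HasCentral (G : SimpleGraph V) (a : V → V → ℝ) : Prop :=
  ∃ x : V → ℝ, ∀ u v : V, G.Adj u v → x u - x v < a u v

/-- Number of edges of `G_•` from `i` to vertices outside `W` (including the edge to the sink). -/
noncomputable def dW (G : SimpleGraph V) (W : Finset V) (i : V) : ℕ :=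
  1 + (Finset.univ.filter (fun u => u ∉ W ∧ G.Adj i u)).card

/-- `c` is a parking function of `G_•` with respect to the added sink `v₀`. -/
def IsPF (G : SimpleGraph V) (c : V → ℤ) : Prop :=
  ∀ W : Finset V, W.Nonempty → ∃ i ∈ W, 0 ≤ c i ∧ c i < dW G W i

section CycleAux

variable {n : ℕ}

open Fin.CommRing

lemma cg_adj [NeZero n] (hn : 3 ≤ n) {u v : Fin n} :
    (SimpleGraph.cycleGraph n).Adj u v ↔ v = u + 1 ∨ u = v + 1 := by
  obtain ⟨m, rfl⟩ : ∃ m, n = m + 2 := ⟨n - 2, by omega⟩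
  rw [SimpleGraph.cycleGraph_adj, sub_eq_iff_eq_add', sub_eq_iff_eq_add']
  exact or_comm

lemma two_step_ne [NeZero n] (hn : 3 ≤ n) (v : Fin n) : v + 1 + 1 ≠ v := by
  haveI : NeZero n := ⟨by omega⟩
  intro h
  rw [add_assoc] at h
  have h2 : (1 + 1 : Fin n) = 0 := by
    have := add_eq_left.mp h
    exact this
  have h3 : ((2 : ℕ) : Fin n) = 0 := by
    rw [Nat.cast_ofNat, ← one_add_one_eq_two]; exact h2
  rw [Fin.natCast_eq_zero] at h3
  have := Nat.le_of_dvd (by norm_num) h3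
  omega

lemma cyc_classify [NeZero n] (hn : 3 ≤ n) {k : ℕ} (hk : 1 ≤ k) (c : Fin (k + 1) → Fin n)
    (hinj : Function.Injective c)
    (hadj : ∀ i, (SimpleGraph.cycleGraph n).Adj (c i) (c (i + 1))) :
    k = 1 ∨ (k + 1 = n ∧ ((∀ i, c (i + 1) = c i + 1) ∨ (∀ i, c (i + 1) = c i - 1))) := by
  haveI : NeZero n := ⟨by omega⟩
  by_cases hk1 : k = 1
  · exact Or.inl hk1
  have hk2 : 2 ≤ k := by omega
  have hkne : ∀ j : Fin (k + 1), j + 1 + 1 ≠ j := two_step_ne (by omega)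
  have hstep : ∀ i, c (i + 1) = c i + 1 ∨ c (i + 1) = c i - 1 := by
    intro i
    rcases (cg_adj hn).1 (hadj i) with h | h
    · exact Or.inl h
    · exact Or.inr (by rw [h]; ring)
  have hmix : ∀ i, (c (i + 1) = c i + 1 ↔ c (i + 1 + 1) = c (i + 1) + 1) := by
    intro i
    constructor
    · intro hp
      by_contra hq
      have hq' := (hstep (i + 1)).resolve_left hq
      have he : c (i + 1 + 1) = c i := by rw [hq', hp, add_sub_cancel_right]
      exact hkne i (hinj he)
    · intro hq
      by_contra hp
      have hp' := (hstep i).resolve_left hp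
      have he : c (i + 1 + 1) = c i := by rw [hq, hp', sub_add_cancel]
      exact hkne i (hinj he)
  have hconst : ∀ i : Fin (k + 1), (c (i + 1) = c i + 1 ↔ c (0 + 1) = c 0 + 1) := by
    have key : ∀ m : ℕ, (c ((m : Fin (k + 1)) + 1) = c (m : Fin (k + 1)) + 1 ↔
        c (0 + 1) = c 0 + 1) := by
      intro m
      induction m with
      | zero => simp
      | succ m ih =>
        have hc : ((m + 1 : ℕ) : Fin (k + 1)) = (m : Fin (k + 1)) + 1 := by push_cast; ring
        rw [hc, ← hmix (m : Fin (k + 1))]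
        exact ih
    intro i
    have : ((i.val : ℕ) : Fin (k + 1)) = i := Fin.cast_val_eq_self i
    rw [← this]
    exact key i.val
  have hle : k + 1 ≤ n := by
    have := Fintype.card_le_of_injective c hinj
    simpa using this
  by_cases hbase : c (0 + 1) = c 0 + 1
  · have hplus : ∀ i, c (i + 1) = c i + 1 := fun i => (hconst i).2 hbase
    have hiter : ∀ m : ℕ, c ((m : Fin (k + 1))) = c 0 + (m : Fin n) := by
      intro m
      induction m with
      | zero => simp
      | succ m ih =>
        have hc : ((m + 1 : ℕ) : Fin (k + 1)) = (m : Fin (k + 1)) + 1 := by push_cast; ring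
        rw [hc, hplus, ih]
        push_cast
        ring
    have h0 : ((k + 1 : ℕ) : Fin (k + 1)) = 0 := by
      rw [Fin.natCast_eq_zero]
    have hdvd : n ∣ (k + 1) := by
      have := hiter (k + 1)
      rw [h0] at this
      have h2 : ((k + 1 : ℕ) : Fin n) = 0 := by
        have := add_eq_left.mp this.symm
        exact this
      rwa [Fin.natCast_eq_zero] at h2
    exact Or.inr ⟨le_antisymm hle (Nat.le_of_dvd (by omega) hdvd), Or.inl hplus⟩
  · have hminus : ∀ i, c (i + 1) = c i - 1 := fun i =>
      (hstep i).resolve_left (fun h => hbase ((hconst i).1 h))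
    have hiter : ∀ m : ℕ, c ((m : Fin (k + 1))) = c 0 - (m : Fin n) := by
      intro m
      induction m with
      | zero => simp
      | succ m ih =>
        have hc : ((m + 1 : ℕ) : Fin (k + 1)) = (m : Fin (k + 1)) + 1 := by push_cast; ring
        rw [hc, hminus, ih]
        push_cast
        ring
    have h0 : ((k + 1 : ℕ) : Fin (k + 1)) = 0 := by
      rw [Fin.natCast_eq_zero]
    have hdvd : n ∣ (k + 1) := by
      have := hiter (k + 1)
      rw [h0] at this
      have h2 : ((k + 1 : ℕ) : Fin n) = 0 := by
        have := sub_eq_self.mp this.symm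
        exact this
      rwa [Fin.natCast_eq_zero] at h2
    exact Or.inr ⟨le_antisymm hle (Nat.le_of_dvd (by omega) hdvd), Or.inr hminus⟩

lemma score_plus [NeZero n] (O : Finset (Fin n × Fin n)) {k : ℕ} (c : Fin (k + 1) → Fin n)
    (hinj : Function.Injective c) (hkn : k + 1 = n)
    (hc : ∀ i, c (i + 1) = c i + 1) :
    cycScore (fun _ _ => (1 : ℝ)) O c =
      (n : ℝ) - 2 * ((Finset.univ.filter (fun v : Fin n => (v, v + 1) ∈ O)).card : ℝ) := by
  have hbij : Function.Bijective c :=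
    (Fintype.bijective_iff_injective_and_card c).2 ⟨hinj, by simp [hkn]⟩
  have h1 : cycScore (fun _ _ => (1 : ℝ)) O c
      = ∑ v : Fin n, (if (v, v + 1) ∈ O then (-1 : ℝ) else 1) := by
    unfold cycScore
    refine Fintype.sum_bijective c hbij _ _ (fun i => ?_)
    rw [hc i]
    simp [stepScore]
  rw [h1, Finset.sum_ite, Finset.sum_const, Finset.sum_const]
  have hcards : (Finset.univ.filter (fun v : Fin n => ¬((v, v + 1) ∈ O))).card =
      n - (Finset.univ.filter (fun v : Fin n => (v, v + 1) ∈ O)).card := by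
    rw [Finset.filter_not, Finset.card_sdiff_of_subset (Finset.filter_subset _ _), Finset.card_univ,
      Fintype.card_fin]
  have hle : (Finset.univ.filter (fun v : Fin n => (v, v + 1) ∈ O)).card ≤ n := by
    calc (Finset.univ.filter (fun v : Fin n => (v, v + 1) ∈ O)).card
        ≤ (Finset.univ : Finset (Fin n)).card := Finset.card_filter_le _ _
      _ = n := by simp
  rw [hcards, nsmul_eq_mul, nsmul_eq_mul, Nat.cast_sub hle]
  ring

lemma score_minus [NeZero n] (O : Finset (Fin n × Fin n)) {k : ℕ} (c : Fin (k + 1) → Fin n)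
    (hinj : Function.Injective c) (hkn : k + 1 = n)
    (hc : ∀ i, c (i + 1) = c i - 1) :
    cycScore (fun _ _ => (1 : ℝ)) O c =
      (n : ℝ) - 2 * ((Finset.univ.filter (fun v : Fin n => (v + 1, v) ∈ O)).card : ℝ) := by
  have hbij : Function.Bijective (fun i => c i - 1) := by
    have h1 : Function.Bijective c :=
      (Fintype.bijective_iff_injective_and_card c).2 ⟨hinj, by simp [hkn]⟩
    exact (Equiv.subRight (1 : Fin n)).bijective.comp h1
  have h1 : cycScore (fun _ _ => (1 : ℝ)) O c
      = ∑ v : Fin n, (if (v + 1, v) ∈ O then (-1 : ℝ) else 1) := by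
    unfold cycScore
    refine Fintype.sum_bijective (fun i => c i - 1) hbij _ _ (fun i => ?_)
    rw [hc i]
    have h2 : c i - 1 + 1 = c i := sub_add_cancel _ _
    simp only [h2]
    simp [stepScore]
  rw [h1, Finset.sum_ite, Finset.sum_const, Finset.sum_const]
  have hcards : (Finset.univ.filter (fun v : Fin n => ¬((v + 1, v) ∈ O))).card =
      n - (Finset.univ.filter (fun v : Fin n => (v + 1, v) ∈ O)).card := by
    rw [Finset.filter_not, Finset.card_sdiff_of_subset (Finset.filter_subset _ _), Finset.card_univ,
      Fintype.card_fin]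
  have hle : (Finset.univ.filter (fun v : Fin n => (v + 1, v) ∈ O)).card ≤ n := by
    calc (Finset.univ.filter (fun v : Fin n => (v + 1, v) ∈ O)).card
        ≤ (Finset.univ : Finset (Fin n)).card := Finset.card_filter_le _ _
      _ = n := by simp
  rw [hcards, nsmul_eq_mul, nsmul_eq_mul, Nat.cast_sub hle]
  ring

lemma two_cycle_score [NeZero n] (O : Finset (Fin n × Fin n)) (c : Fin (1 + 1) → Fin n)
    (hcomp : ∀ i : Fin (1 + 1), (c (i + 1), c i) ∉ O) :
    cycScore (fun _ _ => (1 : ℝ)) O c = 2 := by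
  have e1 : (0 : Fin (1 + 1)) + 1 = 1 := rfl
  have e2 : (1 : Fin (1 + 1)) + 1 = 0 := rfl
  have h0 : (c 0, c 1) ∉ O := by have := hcomp 1; rwa [e2] at this
  have h1 : (c 1, c 0) ∉ O := by have := hcomp 0; rwa [e1] at this
  unfold cycScore stepScore
  rw [Fin.sum_univ_two, e1, e2]
  rw [if_neg h0, if_neg h1]
  norm_num

lemma card_plus_eq [NeZero n] (O : Finset (Fin n × Fin n)) (hplus : ∀ p ∈ O, p.2 = p.1 + 1) :
    (Finset.univ.filter (fun v : Fin n => (v, v + 1) ∈ O)).card = O.card := by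
  apply Finset.card_bij (fun v _ => (v, v + 1))
  · intro v hv; exact (Finset.mem_filter.1 hv).2
  · intro a _ b _ h; exact congrArg Prod.fst h
  · intro p hp
    refine ⟨p.1, Finset.mem_filter.2 ⟨Finset.mem_univ _, ?_⟩, ?_⟩
    · rw [← hplus p hp]; exact hp
    · exact Prod.ext rfl (hplus p hp).symm

lemma card_minus_eq [NeZero n] (O : Finset (Fin n × Fin n)) (hminus : ∀ p ∈ O, p.1 = p.2 + 1) :
    (Finset.univ.filter (fun v : Fin n => (v + 1, v) ∈ O)).card = O.card := by
  apply Finset.card_bij (fun v _ => (v + 1, v))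
  · intro v hv; exact (Finset.mem_filter.1 hv).2
  · intro a _ b _ h; exact congrArg Prod.snd h
  · intro p hp
    refine ⟨p.2, Finset.mem_filter.2 ⟨Finset.mem_univ _, ?_⟩, ?_⟩
    · rw [← hminus p hp]; exact hp
    · exact Prod.ext (hminus p hp).symm rfl

lemma card_plus_le [NeZero n] (O : Finset (Fin n × Fin n)) :
    (Finset.univ.filter (fun v : Fin n => (v, v + 1) ∈ O)).card ≤ O.card := by
  apply Finset.card_le_card_of_injOn (fun v => (v, v + 1))
  · intro v hv; exact (Finset.mem_filter.1 hv).2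
  · intro a _ b _ h; exact congrArg Prod.fst h

lemma card_minus_le [NeZero n] (O : Finset (Fin n × Fin n)) :
    (Finset.univ.filter (fun v : Fin n => (v + 1, v) ∈ O)).card ≤ O.card := by
  apply Finset.card_le_card_of_injOn (fun v => (v + 1, v))
  · intro v hv; exact (Finset.mem_filter.1 hv).2
  · intro a _ b _ h; exact congrArg Prod.snd h

lemma cast_add_one [NeZero n] (hn : 3 ≤ n) {k : ℕ} (hkn : k + 1 = n) (i : Fin (k + 1)) :
    Fin.cast hkn (i + 1) = Fin.cast hkn i + 1 := by
  apply Fin.ext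
  simp only [Fin.coe_cast, Fin.add_def, Fin.val_one]
  subst hkn
  rfl

lemma almost_iff (hn : 3 ≤ n) [NeZero n] (O : Finset (Fin n × Fin n))
    (hO : IsPO (SimpleGraph.cycleGraph n) O) :
    IsAlmostAdmissible (SimpleGraph.cycleGraph n) (fun _ _ => (1 : ℝ)) O ↔
      (2 * O.card = n ∧ ((∀ p ∈ O, p.2 = p.1 + 1) ∨ (∀ p ∈ O, p.1 = p.2 + 1))) := by
  constructor
  · rintro ⟨hnadm, hpos⟩
    unfold IsAdmissible at hnadm
    push_neg at hnadm
    obtain ⟨k, c, hpc, hscore⟩ := hnadm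
    obtain ⟨hk, hinj, hcomp⟩ := hpc
    have hadj : ∀ i, (SimpleGraph.cycleGraph n).Adj (c i) (c (i + 1)) := fun i => (hcomp i).1
    have h0 : cycScore (fun _ _ => (1 : ℝ)) O c = 0 :=
      le_antisymm hscore (hpos k c ⟨hk, hinj, hcomp⟩)
    rcases cyc_classify hn hk c hinj hadj with hk1 | ⟨hkn, hdir⟩
    · exfalso
      subst hk1
      have := two_cycle_score O c (fun i => (hcomp i).2)
      rw [h0] at this
      norm_num at this
    have hsurj : Function.Surjective c :=
      ((Fintype.bijective_iff_injective_and_card c).2 ⟨hinj, by simp [hkn]⟩).2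
    rcases hdir with hplus | hminus
    · have hall : ∀ p ∈ O, p.2 = p.1 + 1 := by
        intro p hp
        rcases (cg_adj hn).1 ((hO p hp).1) with h | h
        · exact h
        · exfalso
          obtain ⟨i, hi⟩ := hsurj p.2
          have hc2 := (hcomp i).2
          rw [hplus i, hi] at hc2
          apply hc2
          have : (p.2 + 1, p.2) = p := Prod.ext h.symm rfl
          rwa [this]
      rw [score_plus O c hinj hkn hplus, card_plus_eq O hall] at h0
      have hcn : (n : ℝ) = 2 * O.card := by linarith
      have : n = 2 * O.card := by exact_mod_cast hcn
      exact ⟨this.symm, Or.inl hall⟩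
    · have hall : ∀ p ∈ O, p.1 = p.2 + 1 := by
        intro p hp
        rcases (cg_adj hn).1 ((hO p hp).1) with h | h
        · exfalso
          obtain ⟨i, hi⟩ := hsurj (p.1 + 1)
          have hc2 := (hcomp i).2
          rw [hminus i, hi, add_sub_cancel_right] at hc2
          apply hc2
          have : (p.1, p.1 + 1) = p := Prod.ext rfl h.symm
          rwa [this]
        · exact h
      rw [score_minus O c hinj hkn hminus, card_minus_eq O hall] at h0
      have hcn : (n : ℝ) = 2 * O.card := by linarith
      have : n = 2 * O.card := by exact_mod_cast hcn
      exact ⟨this.symm, Or.inr hall⟩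
  · rintro ⟨hcard, hdir⟩
    have hO1 : 1 ≤ O.card := by omega
    have hkn : (n - 1) + 1 = n := by omega
    have hnonneg : ∀ (k : ℕ) (c : Fin (k + 1) → Fin n),
        IsPotCycle (SimpleGraph.cycleGraph n) O c → 0 ≤ cycScore (fun _ _ => (1 : ℝ)) O c := by
      intro k c hpc
      obtain ⟨hk, hinj, hcomp⟩ := hpc
      rcases cyc_classify hn hk c hinj (fun i => (hcomp i).1) with hk1 | ⟨hkn', hd⟩
      · subst hk1
        rw [two_cycle_score O c (fun i => (hcomp i).2)]
        norm_num
      have hsurj : Function.Surjective c :=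
        ((Fintype.bijective_iff_injective_and_card c).2 ⟨hinj, by simp [hkn']⟩).2
      rcases hd with hp | hm
      · -- plus traversal: need no minus steps in O compatible; score ≥ 0 needs plus filter ≤ n/2
        rcases hdir with hplus | hminus
        · have hle := card_plus_le (n := n) O
          rw [score_plus O c hinj hkn' hp]
          have h2 : 2 * (Finset.univ.filter (fun v : Fin n => (v, v + 1) ∈ O)).card ≤ n := by
            omega
          have : ((Finset.univ.filter (fun v : Fin n => (v, v + 1) ∈ O)).card : ℝ) * 2 ≤ n := by
            exact_mod_cast by omega
          linarith
        · -- O all-minus nonempty: plus traversal incompatible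
          exfalso
          obtain ⟨p, hp2⟩ := Finset.card_pos.1 (by omega : 0 < O.card)
          obtain ⟨i, hi⟩ := hsurj p.2
          have hc2 := (hcomp i).2
          rw [hp i, hi] at hc2
          apply hc2
          have : (p.2 + 1, p.2) = p := Prod.ext (hminus p hp2).symm rfl
          rwa [this]
      · rcases hdir with hplus | hminus
        · exfalso
          obtain ⟨p, hp2⟩ := Finset.card_pos.1 (by omega : 0 < O.card)
          obtain ⟨i, hi⟩ := hsurj (p.1 + 1)
          have hc2 := (hcomp i).2
          rw [hm i, hi, add_sub_cancel_right] at hc2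
          apply hc2
          have : (p.1, p.1 + 1) = p := Prod.ext rfl (hplus p hp2).symm
          rwa [this]
        · have hle := card_minus_le (n := n) O
          rw [score_minus O c hinj hkn' hm]
          have : ((Finset.univ.filter (fun v : Fin n => (v + 1, v) ∈ O)).card : ℝ) * 2 ≤ n := by
            exact_mod_cast by omega
          linarith
    refine ⟨?_, hnonneg⟩
    intro hadm
    rcases hdir with hplus | hminus
    · set c : Fin ((n - 1) + 1) → Fin n := fun i => Fin.cast hkn i with hcdef
      have hinj : Function.Injective c := by
        rw [hcdef]
        exact fun a b h => Fin.cast_injective hkn h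
      have hc : ∀ i, c (i + 1) = c i + 1 := fun i => cast_add_one hn hkn i
      have hpc : IsPotCycle (SimpleGraph.cycleGraph n) O c := by
        refine ⟨by omega, hinj, fun i => ⟨?_, ?_⟩⟩
        · exact (cg_adj hn).2 (Or.inl (hc i))
        · intro hmem
          have h2 := hplus _ hmem
          rw [hc i] at h2
          exact two_step_ne hn (c i) h2.symm
      have := hadm _ c hpc
      rw [score_plus O c hinj hkn hc, card_plus_eq O hplus] at this
      have hcn : (2 : ℝ) * O.card = n := by exact_mod_cast hcard
      linarith
    · set c : Fin ((n - 1) + 1) → Fin n := fun i => -(Fin.cast hkn i) with hcdef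
      have hinj : Function.Injective c := by
        rw [hcdef]
        exact fun a b h => Fin.cast_injective hkn (neg_injective h)
      have hc : ∀ i, c (i + 1) = c i - 1 := by
        intro i
        show -(Fin.cast hkn (i + 1)) = -(Fin.cast hkn i) - 1
        rw [cast_add_one hn hkn i]
        ring
      have hpc : IsPotCycle (SimpleGraph.cycleGraph n) O c := by
        refine ⟨by omega, hinj, fun i => ⟨?_, ?_⟩⟩
        · refine (cg_adj hn).2 (Or.inr ?_)
          rw [hc i, sub_add_cancel]
        · intro hmem
          have h2 := hminus _ hmem
          rw [hc i] at h2
          simp only at h2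
          have h3 : c i + 1 + 1 = c i := by
            rw [← h2, sub_add_cancel]
          exact two_step_ne hn (c i) h3
      have := hadm _ c hpc
      rw [score_minus O c hinj hkn hc, card_minus_eq O hminus] at this
      have hcn : (2 : ℝ) * O.card = n := by exact_mod_cast hcard
      linarith

lemma isPO_plus [NeZero n] (hn : 3 ≤ n) (O : Finset (Fin n × Fin n))
    (hplus : ∀ p ∈ O, p.2 = p.1 + 1) : IsPO (SimpleGraph.cycleGraph n) O := by
  intro p hp
  have h := hplus p hp
  constructor
  · exact (cg_adj hn).2 (Or.inl h)
  · intro hq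
    have h2 := hplus _ hq
    simp only at h2
    rw [h] at h2
    exact two_step_ne hn p.1 h2.symm

lemma isPO_minus [NeZero n] (hn : 3 ≤ n) (O : Finset (Fin n × Fin n))
    (hminus : ∀ p ∈ O, p.1 = p.2 + 1) : IsPO (SimpleGraph.cycleGraph n) O := by
  intro p hp
  have h := hminus p hp
  constructor
  · exact (cg_adj hn).2 (Or.inr h)
  · intro hq
    have h2 := hminus _ hq
    simp only at h2
    rw [h] at h2
    exact two_step_ne hn p.2 h2.symm

end CycleAux

/-- For the cycle graph `Cₙ` with the SEMI parameter list (all parameters `1`): for odd `n`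
there are no almost-SEMI-admissible partial orientations; for even `n` they are exactly the
orientations of exactly half of the edges, all oriented consistently in one of the two
rotational directions, and there are exactly `2·(n choose n/2)` of them. -/
theorem almost_semi_admissible_cycleGraph (n : ℕ) [NeZero n] (hn : 3 ≤ n) :
    (Odd n → ∀ O : Finset (Fin n × Fin n), IsPO (SimpleGraph.cycleGraph n) O →
      ¬ IsAlmostAdmissible (SimpleGraph.cycleGraph n) (fun _ _ => (1 : ℝ)) O) ∧
    (Even n →
      (∀ O : Finset (Fin n × Fin n), IsPO (SimpleGraph.cycleGraph n) O →
        (IsAlmostAdmissible (SimpleGraph.cycleGraph n) (fun _ _ => (1 : ℝ)) O ↔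
          O.card = n / 2 ∧
            ((∀ p ∈ O, p.2 = p.1 + 1) ∨ (∀ p ∈ O, p.1 = p.2 + 1)))) ∧
      Set.ncard {O : Finset (Fin n × Fin n) | IsPO (SimpleGraph.cycleGraph n) O ∧
          IsAlmostAdmissible (SimpleGraph.cycleGraph n) (fun _ _ => (1 : ℝ)) O} =
        2 * n.choose (n / 2)) := by
  constructor
  · intro hodd O hO hal
    rw [almost_iff hn O hO] at hal
    obtain ⟨h2, -⟩ := hal
    rw [Nat.odd_iff] at hodd
    omega
  intro he
  rw [Nat.even_iff] at he
  constructor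
  · intro O hO
    rw [almost_iff hn O hO]
    constructor
    · rintro ⟨h2, hd⟩; exact ⟨by omega, hd⟩
    · rintro ⟨h2, hd⟩; exact ⟨by omega, hd⟩
  · set f : Finset (Fin n) → Finset (Fin n × Fin n) :=
      fun s => s.image (fun v => (v, v + 1)) with hf
    set g : Finset (Fin n) → Finset (Fin n × Fin n) :=
      fun s => s.image (fun v => (v + 1, v)) with hg
    have hfplus : ∀ s, ∀ p ∈ f s, p.2 = p.1 + 1 := by
      intro s p hp
      simp only [hf, Finset.mem_image] at hp
      obtain ⟨v, -, rfl⟩ := hp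
      rfl
    have hgminus : ∀ s, ∀ p ∈ g s, p.1 = p.2 + 1 := by
      intro s p hp
      simp only [hg, Finset.mem_image] at hp
      obtain ⟨v, -, rfl⟩ := hp
      rfl
    have hfcard : ∀ s : Finset (Fin n), (f s).card = s.card := fun s =>
      Finset.card_image_of_injective s (fun a b h => congrArg Prod.fst h)
    have hgcard : ∀ s : Finset (Fin n), (g s).card = s.card := fun s =>
      Finset.card_image_of_injective s (fun a b h => congrArg Prod.snd h)
    set F : Finset (Finset (Fin n × Fin n)) :=
      ((Finset.univ.powersetCard (n / 2)).image f) ∪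
        ((Finset.univ.powersetCard (n / 2)).image g) with hF
    have hseteq : {O : Finset (Fin n × Fin n) | IsPO (SimpleGraph.cycleGraph n) O ∧
        IsAlmostAdmissible (SimpleGraph.cycleGraph n) (fun _ _ => (1 : ℝ)) O} = ↑F := by
      ext O
      simp only [Set.mem_setOf_eq, hF, Finset.coe_union, Set.mem_union, Finset.mem_coe]
      constructor
      · rintro ⟨hPO, hal⟩
        rw [almost_iff hn O hPO] at hal
        obtain ⟨h2, hd⟩ := hal
        rcases hd with hp | hm
        · left
          refine Finset.mem_image.2 ⟨O.image Prod.fst, ?_, ?_⟩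
          · rw [Finset.mem_powersetCard]
            refine ⟨Finset.subset_univ _, ?_⟩
            rw [Finset.card_image_of_injOn]
            · omega
            · intro p hp' q hq' hpq
              exact Prod.ext hpq (by rw [hp p hp', hp q hq', hpq])
          · rw [hf]
            simp only
            rw [Finset.image_image]
            calc O.image ((fun v => (v, v + 1)) ∘ Prod.fst)
                = O.image id :=
                  Finset.image_congr (fun p hp' => Prod.ext rfl (hp p hp').symm)
              _ = O := Finset.image_id
        · right
          refine Finset.mem_image.2 ⟨O.image Prod.snd, ?_, ?_⟩
          · rw [Finset.mem_powersetCard]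
            refine ⟨Finset.subset_univ _, ?_⟩
            rw [Finset.card_image_of_injOn]
            · omega
            · intro p hp' q hq' hpq
              exact Prod.ext (by rw [hm p hp', hm q hq', hpq]) hpq
          · rw [hg]
            simp only
            rw [Finset.image_image]
            calc O.image ((fun v => (v + 1, v)) ∘ Prod.snd)
                = O.image id :=
                  Finset.image_congr (fun p hp' => Prod.ext (hm p hp').symm rfl)
              _ = O := Finset.image_id
      · intro hmem
        rcases hmem with h | h
        · obtain ⟨s, hs, rfl⟩ := Finset.mem_image.1 h
          rw [Finset.mem_powersetCard] at hs
          have hPO := isPO_plus hn (f s) (hfplus s)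
          refine ⟨hPO, (almost_iff hn _ hPO).2 ⟨?_, Or.inl (hfplus s)⟩⟩
          rw [hfcard s, hs.2]
          omega
        · obtain ⟨s, hs, rfl⟩ := Finset.mem_image.1 h
          rw [Finset.mem_powersetCard] at hs
          have hPO := isPO_minus hn (g s) (hgminus s)
          refine ⟨hPO, (almost_iff hn _ hPO).2 ⟨?_, Or.inr (hgminus s)⟩⟩
          rw [hgcard s, hs.2]
          omega
    rw [hseteq, Set.ncard_coe_finset, hF]
    have hdisj : Disjoint ((Finset.univ.powersetCard (n / 2)).image f)
        ((Finset.univ.powersetCard (n / 2)).image g) := by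
      rw [Finset.disjoint_left]
      intro O hO1 hO2
      obtain ⟨s, hs, rfl⟩ := Finset.mem_image.1 hO1
      obtain ⟨t, ht, hgt⟩ := Finset.mem_image.1 hO2
      rw [Finset.mem_powersetCard] at hs
      have hspos : 0 < s.card := by rw [hs.2]; omega
      obtain ⟨v, hv⟩ := Finset.card_pos.1 hspos
      have hvm : (v, v + 1) ∈ f s := Finset.mem_image_of_mem _ hv
      rw [← hgt] at hvm
      obtain ⟨w, -, hw⟩ := Finset.mem_image.1 hvm
      have h1 : w + 1 = v := congrArg Prod.fst hw
      have h2 : w = v + 1 := congrArg Prod.snd hw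
      rw [h2] at h1
      exact two_step_ne hn v h1
    have hfinj : Function.Injective f := by
      intro s t h
      have := congrArg (fun u => u.image Prod.fst) h
      simp only [hf, Finset.image_image] at this
      rwa [show (Prod.fst ∘ fun v : Fin n => (v, v + 1)) = id from rfl, Finset.image_id,
        Finset.image_id] at this
    have hginj : Function.Injective g := by
      intro s t h
      have := congrArg (fun u => u.image Prod.snd) h
      simp only [hg, Finset.image_image] at this
      rwa [show (Prod.snd ∘ fun v : Fin n => (v + 1, v)) = id from rfl, Finset.image_id,
        Finset.image_id] at this
    rw [Finset.card_union_of_disjoint hdisj, Finset.card_image_of_injective _ hfinj,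
      Finset.card_image_of_injective _ hginj, Finset.card_powersetCard, Finset.card_univ,
      Fintype.card_fin]
    ring
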